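/- Splitting a vertex cannot increase ν: if G̃ is obtained from a finite graph G by splitting a vertex x of degree d₁ + d₂ into two non-adjacent vertices x₁, x₂, where x₁ is joined to d₁ of the former neighbours of x and x₂ to the other d₂, then ν(G) ≥ ν(G̃). -/

import Mathlib

open Finset

variable {V : Type*} [Fintype V] {W : Type*} [Fintype W]

open scoped Classical in
noncomputable def magEnergy (G : SimpleGraph V) (σ : V → V → ℂ) (f : V → ℂ) : ℝ :=
  (1/2) * ∑ x : V, ∑ y : V, if G.Adj x y then ‖f x - σ x y * f y‖ ^ 2 else 0

noncomputable def magDenom (f : V → ℂ) : ℝ := ∑ x : V, ‖f x‖ ^ 2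

noncomputable def lambda1 (G : SimpleGraph V) (σ : V → V → ℂ) : ℝ :=
  sInf { r : ℝ | ∃ f : V → ℂ, f ≠ 0 ∧ r = magEnergy G σ f / magDenom f }

def IsMagPotential (G : SimpleGraph V) (σ : V → V → ℂ) : Prop :=
  (∀ x y, G.Adj x y → ‖σ x y‖ = 1) ∧
  (∀ x y, G.Adj x y → σ y x = (σ x y)⁻¹)

noncomputable def magHeight (G : SimpleGraph V) : ℝ :=
  sSup { r : ℝ | ∃ σ : V → V → ℂ, IsMagPotential G σ ∧ r = lambda1 G σ }

open scoped Classical in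
noncomputable def magLap (G : SimpleGraph V) (σ : V → V → ℂ) (f : V → ℂ) : V → ℂ :=
  fun x => ∑ y : V, if G.Adj x y then f x - σ x y * f y else 0

/-! ### Auxiliary lemmas -/

lemma magDenom_nonneg (f : V → ℂ) : 0 ≤ magDenom f :=
  Finset.sum_nonneg fun _ _ => by positivity

lemma magDenom_pos {f : V → ℂ} (hf : f ≠ 0) : 0 < magDenom f := by
  obtain ⟨v, hv⟩ := Function.ne_iff.mp hf
  refine Finset.sum_pos' (fun i _ => by positivity) ⟨v, Finset.mem_univ v, ?_⟩
  have : ‖f v‖ ≠ 0 := by simpa using hv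
  positivity

lemma magEnergy_nonneg (G : SimpleGraph V) (σ : V → V → ℂ) (f : V → ℂ) :
    0 ≤ magEnergy G σ f := by
  unfold magEnergy
  refine mul_nonneg (by norm_num) ?_
  refine Finset.sum_nonneg fun u _ => Finset.sum_nonneg fun v _ => ?_
  split_ifs <;> positivity

lemma lambda1_bddBelow (G : SimpleGraph V) (σ : V → V → ℂ) :
    BddBelow { r : ℝ | ∃ f : V → ℂ, f ≠ 0 ∧ r = magEnergy G σ f / magDenom f } := by
  refine ⟨0, ?_⟩
  rintro r ⟨f, hf, rfl⟩
  exact div_nonneg (magEnergy_nonneg G σ f) (magDenom_nonneg f)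

lemma lambda1_nonneg (G : SimpleGraph V) (σ : V → V → ℂ) : 0 ≤ lambda1 G σ := by
  refine Real.sInf_nonneg ?_
  rintro r ⟨f, hf, rfl⟩
  exact div_nonneg (magEnergy_nonneg G σ f) (magDenom_nonneg f)

lemma lambda1_le (G : SimpleGraph V) (σ : V → V → ℂ) {f : V → ℂ} (hf : f ≠ 0) :
    lambda1 G σ ≤ magEnergy G σ f / magDenom f :=
  csInf_le (lambda1_bddBelow G σ) ⟨f, hf, rfl⟩

open scoped Classical in
noncomputable def splitEmb (x : V) (P : V → Prop) (u v : V) : Option V :=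
  if u = x ∧ ¬ P v then none else some u

noncomputable def splitPot (x : V) (P : V → Prop) (σ' : Option V → Option V → ℂ)
    (u v : V) : ℂ :=
  σ' (splitEmb x P u v) (splitEmb x P v u)

open scoped Classical in
lemma split_energy_eq (G : SimpleGraph V) (x : V) (P : V → Prop)
    (G' : SimpleGraph (Option V)) (σ' : Option V → Option V → ℂ)
    (hss : ∀ u v, G'.Adj (some u) (some v) ↔
      (G.Adj u v ∧ (u = x → P v) ∧ (v = x → P u)))
    (hns : ∀ v, G'.Adj none (some v) ↔ (G.Adj x v ∧ ¬ P v))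
    (f : V → ℂ) :
    magEnergy G' σ' (fun o => f (o.getD x)) = magEnergy G (splitPot x P σ') f := by
  have hsn : ∀ u, G'.Adj (some u) none ↔ (G.Adj x u ∧ ¬ P u) := fun u => by
    rw [SimpleGraph.adj_comm]; exact hns u
  unfold magEnergy
  congr 1
  simp only [Fintype.sum_option, Option.getD_none, Option.getD_some,
    SimpleGraph.irrefl, if_false, hss, hns, hsn, zero_add]
  have key : ∀ u v : V,
      (if G.Adj u v then ‖f u - splitPot x P σ' u v * f v‖ ^ 2 else 0)
      = (if u = x then (if G.Adj x v ∧ ¬ P v then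
            ‖f x - σ' none (some v) * f v‖ ^ 2 else 0) else 0)
      + (if v = x then (if G.Adj x u ∧ ¬ P u then
            ‖f u - σ' (some u) none * f x‖ ^ 2 else 0) else 0)
      + (if G.Adj u v ∧ (u = x → P v) ∧ (v = x → P u) then
            ‖f u - σ' (some u) (some v) * f v‖ ^ 2 else 0) := by
    intro u v
    unfold splitPot splitEmb
    by_cases hux : u = x
    · subst hux
      by_cases hadj : G.Adj u v
      · have hvx : v ≠ u := hadj.ne'
        by_cases hPv : P v
        · simp [hadj, hPv, hvx]
        · simp [hadj, hPv, hvx]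
      · simp [hadj, SimpleGraph.irrefl]
    · by_cases hvx : v = x
      · subst hvx
        by_cases hadj : G.Adj u v
        · have hadj' : G.Adj v u := hadj.symm
          have hne : u ≠ v := hadj.ne
          by_cases hPu : P u
          · simp [hadj, hadj', hPu, hux, hne]
          · simp [hadj, hadj', hPu, hux, hne]
        · have hadj' : ¬ G.Adj v u := fun h => hadj h.symm
          simp [hadj, hadj', hux]
      · simp [hux, hvx]
  have hL : ∀ (g : V → ℝ), (∑ u : V, ∑ v : V, (if u = x then g v else 0)) = ∑ v : V, g v := by
    intro g
    rw [Finset.sum_comm]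
    simp [Finset.sum_ite_eq']
  have hR : ∀ (h : V → ℝ), (∑ u : V, ∑ v : V, (if v = x then h u else 0)) = ∑ u : V, h u := by
    intro h
    simp [Finset.sum_ite_eq']
  have expand : (∑ u : V, ∑ v : V,
      (if G.Adj u v then ‖f u - splitPot x P σ' u v * f v‖ ^ 2 else 0))
      = (∑ v : V, (if G.Adj x v ∧ ¬ P v then
            ‖f x - σ' none (some v) * f v‖ ^ 2 else 0))
      + (∑ u : V, (if G.Adj x u ∧ ¬ P u then
            ‖f u - σ' (some u) none * f x‖ ^ 2 else 0))
      + (∑ u : V, ∑ v : V, (if G.Adj u v ∧ (u = x → P v) ∧ (v = x → P u) then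
            ‖f u - σ' (some u) (some v) * f v‖ ^ 2 else 0)) := by
    simp only [key, Finset.sum_add_distrib]
    rw [hL, hR]
  rw [expand, Finset.sum_add_distrib]
  ring

theorem magHeight_split_vertex (G : SimpleGraph V) (x : V) (P : V → Prop)
    (G' : SimpleGraph (Option V))
    (hss : ∀ u v, G'.Adj (some u) (some v) ↔
      (G.Adj u v ∧ (u = x → P v) ∧ (v = x → P u)))
    (hns : ∀ v, G'.Adj none (some v) ↔ (G.Adj x v ∧ ¬ P v)) :
    magHeight G' ≤ magHeight G := by
  classical
  have hone : (fun _ : V => (1 : ℂ)) ≠ 0 := by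
    intro h
    have := congrFun h x
    simp at this
  have hBddG : BddAbove {r : ℝ | ∃ σ : V → V → ℂ, IsMagPotential G σ ∧ r = lambda1 G σ} := by
    refine ⟨2 * (Fintype.card V : ℝ) ^ 2, ?_⟩
    rintro r ⟨σ, hσ, rfl⟩
    refine (lambda1_le G σ hone).trans ?_
    have hD : magDenom (fun _ : V => (1 : ℂ)) = (Fintype.card V : ℝ) := by
      unfold magDenom; simp
    have hDone : (1 : ℝ) ≤ magDenom (fun _ : V => (1 : ℂ)) := by
      rw [hD]
      exact_mod_cast Fintype.card_pos_iff.mpr ⟨x⟩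
    have hE : magEnergy G σ (fun _ => 1) ≤ 2 * (Fintype.card V : ℝ) ^ 2 := by
      unfold magEnergy
      have hb : ∀ u v : V,
          (if G.Adj u v then ‖(1 : ℂ) - σ u v * 1‖ ^ 2 else 0) ≤ 4 := by
        intro u v
        split_ifs with h
        · have h1 : ‖1 - σ u v * 1‖ ≤ 2 := by
            rw [mul_one]
            calc ‖1 - σ u v‖
                ≤ ‖(1:ℂ)‖ + ‖σ u v‖ := norm_sub_le _ _
              _ = 2 := by rw [hσ.1 u v h]; norm_num
          calc ‖1 - σ u v * 1‖ ^ 2 ≤ 2 ^ 2 :=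
                pow_le_pow_left₀ (norm_nonneg _) h1 2
            _ = 4 := by norm_num
        · norm_num
      calc (1/2 : ℝ) * ∑ u : V, ∑ v : V,
            (if G.Adj u v then ‖(1:ℂ) - σ u v * 1‖ ^ 2 else 0)
          ≤ (1/2 : ℝ) * ∑ _u : V, ∑ _v : V, (4 : ℝ) := by
            gcongr with u _ v _
            exact hb u v
        _ = 2 * (Fintype.card V : ℝ) ^ 2 := by
            simp [Finset.sum_const, Finset.card_univ]
            ring
    calc magEnergy G σ (fun _ => 1) / magDenom (fun _ : V => (1 : ℂ))
        ≤ magEnergy G σ (fun _ => 1) := div_le_self (magEnergy_nonneg G σ _) hDone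
      _ ≤ 2 * (Fintype.card V : ℝ) ^ 2 := hE
  refine Real.sSup_le ?_ ?_
  · rintro r ⟨σ', hσ', rfl⟩
    have hsn : ∀ u, G'.Adj (some u) none ↔ (G.Adj x u ∧ ¬ P u) := fun u => by
      rw [SimpleGraph.adj_comm]; exact hns u
    have hadjmap : ∀ u v, G.Adj u v → G'.Adj (splitEmb x P u v) (splitEmb x P v u) := by
      intro u v h
      unfold splitEmb
      by_cases hux : u = x ∧ ¬ P v
      · rw [if_pos hux]
        obtain ⟨rfl, hPv⟩ := hux
        rw [if_neg (by rintro ⟨rfl, -⟩; exact G.irrefl h)]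
        exact (hns v).mpr ⟨h, hPv⟩
      · rw [if_neg hux]
        by_cases hvx : v = x ∧ ¬ P u
        · rw [if_pos hvx]
          obtain ⟨rfl, hPu⟩ := hvx
          exact (hsn u).mpr ⟨h.symm, hPu⟩
        · rw [if_neg hvx]
          refine (hss u v).mpr ⟨h, ?_, ?_⟩
          · intro hux'
            by_contra hPv
            exact hux ⟨hux', hPv⟩
          · intro hvx'
            by_contra hPu
            exact hvx ⟨hvx', hPu⟩
    have hpot : IsMagPotential G (splitPot x P σ') := by
      constructor
      · intro u v h
        exact hσ'.1 _ _ (hadjmap u v h)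
      · intro u v h
        show σ' (splitEmb x P v u) (splitEmb x P u v) = _
        exact hσ'.2 _ _ (hadjmap u v h)
    have hle : lambda1 G' σ' ≤ lambda1 G (splitPot x P σ') := by
      refine le_csInf ⟨_, (fun _ => 1), hone, rfl⟩ ?_
      rintro r ⟨f, hf, rfl⟩
      have hf' : (fun o : Option V => f (o.getD x)) ≠ 0 := by
        intro h
        apply hf
        funext v
        exact congrFun h (some v)
      refine (lambda1_le G' σ' hf').trans ?_
      rw [split_energy_eq G x P G' σ' hss hns f]
      have hDle : magDenom f ≤ magDenom (fun o : Option V => f (o.getD x)) := by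
        unfold magDenom
        rw [Fintype.sum_option]
        simp only [Option.getD_none, Option.getD_some]
        exact le_add_of_nonneg_left (by positivity)
      have hE0 : 0 ≤ magEnergy G (splitPot x P σ') f := magEnergy_nonneg _ _ _
      have hD0 : 0 < magDenom f := magDenom_pos hf
      gcongr
    exact hle.trans (le_csSup hBddG ⟨_, hpot, rfl⟩)
  · have h1 : IsMagPotential G (fun _ _ => 1) :=
      ⟨fun _ _ _ => by simp, fun _ _ _ => by simp⟩
    exact (lambda1_nonneg G _).trans (le_csSup hBddG ⟨_, h1, rfl⟩)
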